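/- In a partition of $2m+1$ parametrizing a nilpotent orbit of $\mathfrak{so}(2m+1,\mathbb{C})$ (every even part with even multiplicity), pair the transpose columns as $(m_0)(m_1, m_2) \cdots (m_{2p-1}, m_{2p})$ after removing all adjacent equal pairs $m'_{2j} = m'_{2j+1}$. Then $m_0$ is odd, and within each remaining pair $(m_{2i-1}, m_{2i})$ the two entries have the same parity. -/

import Mathlib

lemma aux_card_le_sum (s : Multiset ℕ) (h : ∀ x ∈ s, 0 < x) : Multiset.card s ≤ s.sum := by
  induction s using Multiset.induction with
  | empty => simp
  | cons a t ih =>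
    simp only [Multiset.card_cons, Multiset.sum_cons]
    have := h a (Multiset.mem_cons_self a t)
    have := ih (fun x hx => h x (Multiset.mem_cons_of_mem hx))
    omega

lemma aux_colf_succ (s : Multiset ℕ) (j : ℕ) :
    Multiset.card (s.filter (fun x => j + 1 ≤ x)) =
      Multiset.card (s.filter (fun x => j + 2 ≤ x)) + Multiset.count (j + 1) s := by
  induction s using Multiset.induction with
  | empty => simp
  | cons a t ih =>
    rw [Multiset.filter_cons, Multiset.filter_cons, Multiset.count_cons]
    simp only [Multiset.card_add, apply_ite Multiset.card, Multiset.card_singleton,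
      Multiset.card_zero, ih]
    split_ifs <;> omega

lemma aux_sum_count (n : ℕ) (s : Multiset ℕ) (hs : ∀ x ∈ s, x ≤ n) :
    ∑ j ∈ Finset.range n, Multiset.countP (fun x => j + 1 ≤ x) s = s.sum := by
  induction s using Multiset.induction with
  | empty => simp
  | cons a t ih =>
    simp only [Multiset.countP_cons, Multiset.sum_cons, Finset.sum_add_distrib]
    rw [ih (fun x hx => hs x (Multiset.mem_cons_of_mem hx))]
    have ha : a ≤ n := hs a (Multiset.mem_cons_self a t)
    have h2 : (∑ j ∈ Finset.range n, if j + 1 ≤ a then 1 else 0) = a := by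
      rw [Finset.sum_boole]
      have : Finset.filter (fun j => j + 1 ≤ a) (Finset.range n) = Finset.range a := by
        ext j; simp; omega
      rw [this, Finset.card_range]; simp
    omega

/-- Let `P` be a partition of `2m+1` parametrizing a nilpotent
orbit of `so(2m+1,ℂ)` (every even part has even multiplicity), with multiset
of (positive) columns `cols`.  Suppose the weakly decreasing sequence
`mm 0 ≥ mm 1 ≥ … ≥ mm (2p)` (of odd length `2p+1`, possibly ending in an
appended zero) is obtained from the column sequence by removing adjacent equal
pairs of columns — encoded by `cols = {mm 0, …, mm (2p)}.filter (0 < ·) + Q + Q`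
for some multiset `Q` of removed columns — in such a way that no further
adjacent equal pairs in even–odd position remain, i.e. `mm (2i) > mm (2i+1)`
for `2i+1 ≤ 2p`.  Pairing the surviving columns as
`(mm 0)(mm 1, mm 2)⋯(mm (2p-1), mm (2p))`, the first column `mm 0` is odd and
the two members of each pair `(mm (2i-1), mm (2i))` have the same parity. -/
theorem stmt11 (m p : ℕ) (P : Nat.Partition (2 * m + 1))
    (heven : ∀ i, Even i → Even (Multiset.count i P.parts))
    (cols : Multiset ℕ)
    (hcols : cols = ((Multiset.range (2 * m + 1)).map
      (fun j => Multiset.card (P.parts.filter (fun x => j + 1 ≤ x)))).filter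
        (fun c => 0 < c))
    (mm : ℕ → ℕ) (Q : Multiset ℕ) (hQpos : ∀ q ∈ Q, 0 < q)
    (hanti : ∀ i j, i ≤ j → j ≤ 2 * p → mm j ≤ mm i)
    (hstop : ∀ i, 2 * i + 1 ≤ 2 * p → mm (2 * i + 1) < mm (2 * i))
    (hsplit : cols =
      (((List.range (2 * p + 1)).map mm : Multiset ℕ).filter (fun c => 0 < c))
        + Q + Q) :
    Odd (mm 0) ∧
    ∀ i, 1 ≤ i → i ≤ p → mm (2 * i - 1) % 2 = mm (2 * i) % 2 := by
  classical
  set c : ℕ → ℕ := fun j => Multiset.card (P.parts.filter (fun x => j + 1 ≤ x)) with hcdef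
  set g : ℕ → ℕ := fun t => Multiset.card (cols.filter (fun x => t ≤ x)) with hgdef
  set K : ℕ → ℕ := fun t =>
    ((Finset.range (2 * p + 1)).filter (fun j => t ≤ mm j)).card with hKdef
  set Kc : ℕ → ℕ := fun t =>
    ((Finset.range (2 * m + 1)).filter (fun j => t ≤ c j)).card with hKcdef
  -- basic facts about c
  have hcanti : ∀ j k, j ≤ k → c k ≤ c j := by
    intro j k hjk
    exact Multiset.card_le_card (Multiset.monotone_filter_right _
      (fun x hx => le_trans (by omega : j + 1 ≤ k + 1) hx))
  have hcsucc : ∀ v, c v = c (v + 1) + Multiset.count (v + 1) P.parts := by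
    intro v
    exact aux_colf_succ P.parts v
  have hpartscard : Multiset.card P.parts ≤ 2 * m + 1 := by
    have := aux_card_le_sum P.parts (fun x hx => P.parts_pos hx)
    rw [P.parts_sum] at this; exact this
  have hcle : ∀ j, c j ≤ 2 * m + 1 := fun j =>
    le_trans (Multiset.card_le_card (Multiset.filter_le _ _)) hpartscard
  -- g expressed via Kc for t ≥ 1
  have hgKc : ∀ t, 1 ≤ t → g t = Kc t := by
    intro t ht
    rw [hgdef, hKcdef]
    dsimp only
    rw [hcols, Multiset.filter_filter]
    rw [Finset.card_def, Finset.filter_val, Finset.range_val]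
    rw [← Multiset.countP_eq_card_filter, ← Multiset.countP_eq_card_filter,
      Multiset.countP_map]
    rw [Multiset.countP_eq_card_filter]
    congr 1
    apply Multiset.filter_congr
    intro j _
    constructor
    · rintro ⟨h1, _⟩; exact h1
    · intro h1; exact ⟨h1, by omega⟩
  -- g ≡ K mod 2 for t ≥ 1
  have hgK : ∀ t, 1 ≤ t → ∃ q, g t = K t + 2 * q := by
    intro t ht
    refine ⟨Multiset.card (Q.filter (fun x => t ≤ x)), ?_⟩
    rw [hgdef, hKdef]
    dsimp only
    rw [hsplit, Multiset.filter_add, Multiset.filter_add, Multiset.card_add,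
      Multiset.card_add]
    have hmain : Multiset.card
        ((Multiset.filter (fun x => t ≤ x)
          (Multiset.filter (fun c => 0 < c)
            ((List.range (2 * p + 1)).map mm : Multiset ℕ)))) =
        ((Finset.range (2 * p + 1)).filter (fun j => t ≤ mm j)).card := by
      have hco : ((List.range (2 * p + 1)).map mm : Multiset ℕ) =
          Multiset.map mm (Multiset.range (2 * p + 1)) := rfl
      rw [hco, Multiset.filter_filter]
      rw [Finset.card_def, Finset.filter_val, Finset.range_val]
      rw [← Multiset.countP_eq_card_filter, ← Multiset.countP_eq_card_filter,
        Multiset.countP_map]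
      rw [Multiset.countP_eq_card_filter]
      congr 1
      apply Multiset.filter_congr
      intro j _
      constructor
      · rintro ⟨h1, _⟩; exact h1
      · intro h1; exact ⟨h1, by omega⟩
    rw [hmain]; ring
  -- antitonicity of g
  have hganti : ∀ t t', t ≤ t' → g t' ≤ g t := by
    intro t t' htt
    exact Multiset.card_le_card (Multiset.monotone_filter_right _
      (fun x hx => le_trans htt hx))
  -- bounds for K
  have hKge : ∀ t k, k ≤ 2 * p → t ≤ mm k → k + 1 ≤ K t := by
    intro t k hk ht
    rw [hKdef]; dsimp only
    calc k + 1 = (Finset.range (k + 1)).card := (Finset.card_range _).symm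
      _ ≤ _ := by
          apply Finset.card_le_card
          intro j hj
          rw [Finset.mem_range] at hj
          rw [Finset.mem_filter, Finset.mem_range]
          exact ⟨by omega, le_trans ht (hanti j k (by omega) hk)⟩
  have hKle : ∀ t k, k ≤ 2 * p → mm k < t → K t ≤ k := by
    intro t k hk ht
    rw [hKdef]; dsimp only
    calc ((Finset.range (2 * p + 1)).filter (fun j => t ≤ mm j)).card
        ≤ (Finset.range k).card := by
          apply Finset.card_le_card
          intro j hj
          rw [Finset.mem_filter, Finset.mem_range] at hj
          rw [Finset.mem_range]
          by_contra hjk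
          have : mm j ≤ mm k := hanti k j (by omega) (by omega)
          omega
      _ = k := Finset.card_range _
  have hKtop : ∀ t, K t ≤ 2 * p + 1 := by
    intro t
    rw [hKdef]; dsimp only
    exact le_trans (Finset.card_filter_le _ _) (le_of_eq (Finset.card_range _))
  -- bounds for Kc
  have hKcge : ∀ t v, v ≤ 2 * m → t ≤ c v → v + 1 ≤ Kc t := by
    intro t v hv ht
    rw [hKcdef]; dsimp only
    calc v + 1 = (Finset.range (v + 1)).card := (Finset.card_range _).symm
      _ ≤ _ := by
          apply Finset.card_le_card
          intro j hj
          rw [Finset.mem_range] at hj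
          rw [Finset.mem_filter, Finset.mem_range]
          exact ⟨by omega, le_trans ht (hcanti j v (by omega))⟩
  have hKcle : ∀ t v, c v < t → Kc t ≤ v := by
    intro t v ht
    rw [hKcdef]; dsimp only
    calc ((Finset.range (2 * m + 1)).filter (fun j => t ≤ c j)).card
        ≤ (Finset.range v).card := by
          apply Finset.card_le_card
          intro j hj
          rw [Finset.mem_filter, Finset.mem_range] at hj
          rw [Finset.mem_range]
          by_contra hjv
          have : c j ≤ c v := hcanti v j (by omega)
          omega
      _ = v := Finset.card_range _
  -- every positive mm value is ≤ 2m+1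
  have hmmle : ∀ k, k ≤ 2 * p → 0 < mm k → mm k ≤ 2 * m + 1 := by
    intro k hk hpos
    have hmem : mm k ∈ cols := by
      rw [hsplit]
      refine Multiset.mem_add.mpr (Or.inl (Multiset.mem_add.mpr (Or.inl ?_)))
      rw [Multiset.mem_filter]
      constructor
      · have : mm k ∈ (List.range (2 * p + 1)).map mm := by
          apply List.mem_map.mpr
          exact ⟨k, List.mem_range.mpr (by omega), rfl⟩
        exact Multiset.mem_coe.mpr this
      · exact hpos
    rw [hcols] at hmem
    rw [Multiset.mem_filter] at hmem
    obtain ⟨j, _, hj⟩ := Multiset.mem_map.mp hmem.1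
    rw [← hj]
    exact hcle j
  -- main pairing claim
  have hpair : ∀ i, 1 ≤ i → i ≤ p → mm (2 * i - 1) % 2 = mm (2 * i) % 2 := by
    intro i hi1 hip
    set a := mm (2 * i - 1) with hadef
    set b := mm (2 * i) with hbdef
    have hba : b ≤ a := hanti (2 * i - 1) (2 * i) (by omega) (by omega)
    rcases eq_or_lt_of_le hba with heq | hlt
    · rw [← heq]
    · -- K in the window
      have hKwin : ∀ t, b < t → t ≤ a → K t = 2 * i := by
        intro t htb hta
        have h1 : 2 * i ≤ K t := by
          have := hKge t (2 * i - 1) (by omega) hta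
          omega
        have h2 : K t ≤ 2 * i := hKle t (2 * i) (by omega) htb
        omega
      have hKa1 : K (a + 1) + 1 = 2 * i := by
        have h1 : K (a + 1) ≤ 2 * i - 1 := hKle (a + 1) (2 * i - 1) (by omega) (by omega)
        have h2 : 2 * i - 1 ≤ K (a + 1) := by
          rcases Nat.eq_or_lt_of_le hi1 with h | h
          · -- i = 1 : 2*i - 2 = 0
            have hst := hstop (i - 1) (by omega)
            have hidx : 2 * (i - 1) + 1 = 2 * i - 1 := by omega
            have hidx2 : 2 * (i - 1) = 2 * i - 2 := by omega
            rw [hidx, hidx2] at hst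
            have := hKge (a + 1) (2 * i - 2) (by omega) (by omega)
            omega
          · have hst := hstop (i - 1) (by omega)
            have hidx : 2 * (i - 1) + 1 = 2 * i - 1 := by omega
            have hidx2 : 2 * (i - 1) = 2 * i - 2 := by omega
            rw [hidx, hidx2] at hst
            have := hKge (a + 1) (2 * i - 2) (by omega) (by omega)
            omega
        omega
      have hKb : K b = 2 * i + 1 := by
        have h1 : 2 * i + 1 ≤ K b := hKge b (2 * i) (by omega) (le_refl _)
        have h2 : K b ≤ 2 * i + 1 := by
          rcases Nat.lt_or_ge i p with h | h
          · have hst := hstop i (by omega)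
            exact hKle b (2 * i + 1) (by omega) (by omega)
          · have hip' : i = p := by omega
            have := hKtop b
            omega
        omega
      have ha2m : a ≤ 2 * m + 1 := hmmle (2 * i - 1) (by omega) (by omega)
      -- fibers of g over the window are even
      set S : Finset ℕ := Finset.Ioc b a with hSdef
      have hfib : ∀ v ∈ S.image g, Even ((S.filter (fun t => g t = v)).card) := by
        intro v hv
        obtain ⟨t₀, ht₀, hvt₀⟩ := Finset.mem_image.mp hv
        rw [hSdef, Finset.mem_Ioc] at ht₀
        obtain ⟨q₀, hq₀⟩ := hgK t₀ (by omega)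
        have hKt₀ : K t₀ = 2 * i := hKwin t₀ ht₀.1 ht₀.2
        have hveven : v % 2 = 0 := by rw [← hvt₀, hq₀, hKt₀]; omega
        have hvge : 2 ≤ v := by rw [← hvt₀, hq₀, hKt₀]; omega
        -- v ≤ 2m
        have hv2m : v ≤ 2 * m := by
          have h1 : v ≤ g 1 := by rw [← hvt₀]; exact hganti 1 t₀ (by omega)
          have h2 : g 1 = Kc 1 := hgKc 1 (le_refl _)
          have h3 : Kc 1 ≤ 2 * m + 1 := by
            rw [hKcdef]; dsimp only
            exact le_trans (Finset.card_filter_le _ _) (le_of_eq (Finset.card_range _))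
          omega
        -- the fiber equals the fiber over (0, 2m+1]
        have hS : (Finset.Ioc 0 (2 * m + 1)).filter (fun t => g t = v) =
            S.filter (fun t => g t = v) := by
          ext t
          rw [Finset.mem_filter, Finset.mem_filter, hSdef, Finset.mem_Ioc, Finset.mem_Ioc]
          constructor
          · rintro ⟨⟨ht1, htM⟩, hgt⟩
            refine ⟨⟨?_, ?_⟩, hgt⟩
            · -- b < t
              by_contra htb
              push_neg at htb
              have hb1 : 1 ≤ b := by omega
              obtain ⟨qb, hqb⟩ := hgK b hb1
              have hgbodd : g b % 2 = 1 := by rw [hqb, hKb]; omega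
              have h1 : v ≤ g b := by
                rw [← hvt₀]; exact hganti b t₀ (by omega)
              have h2 : g b ≤ g t := hganti t b htb
              omega
            · -- t ≤ a
              by_contra hta
              push_neg at hta
              obtain ⟨qa, hqa⟩ := hgK (a + 1) (by omega)
              have hgaodd : g (a + 1) % 2 = 1 := by rw [hqa]; omega
              have h1 : g (a + 1) ≤ v := by
                rw [← hvt₀]; exact hganti t₀ (a + 1) (by omega)
              have h2 : g t ≤ g (a + 1) := hganti (a + 1) t (by omega)
              omega
          · rintro ⟨⟨htb, hta⟩, hgt⟩
            exact ⟨⟨by omega, by omega⟩, hgt⟩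
        rw [← hS]
        -- counting thresholds
        obtain ⟨w, rfl⟩ : ∃ w, v = w + 1 := ⟨v - 1, by omega⟩
        have hIocv : ∀ u, u ≤ 2 * m →
            (Finset.Ioc 0 (2 * m + 1)).filter (fun t => u + 1 ≤ g t) =
              Finset.Ioc 0 (c u) := by
          intro u hu
          ext t
          rw [Finset.mem_filter, Finset.mem_Ioc, Finset.mem_Ioc]
          constructor
          · rintro ⟨⟨ht1, htM⟩, hgt⟩
            refine ⟨ht1, ?_⟩
            by_contra htc
            push_neg at htc
            have := hKcle t u htc
            rw [← hgKc t (by omega)] at this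
            omega
          · rintro ⟨ht1, htc⟩
            have htM : t ≤ 2 * m + 1 := le_trans htc (hcle u)
            have := hKcge t u hu htc
            rw [← hgKc t (by omega)] at this
            exact ⟨⟨ht1, htM⟩, this⟩
        have hsplitcard :
            ((Finset.Ioc 0 (2 * m + 1)).filter (fun t => w + 1 ≤ g t)).card =
            ((Finset.Ioc 0 (2 * m + 1)).filter (fun t => g t = w + 1)).card +
            ((Finset.Ioc 0 (2 * m + 1)).filter (fun t => w + 2 ≤ g t)).card := by
          have hpred : (Finset.Ioc 0 (2 * m + 1)).filter (fun t => w + 1 ≤ g t) =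
              (Finset.Ioc 0 (2 * m + 1)).filter (fun t => g t = w + 1) ∪
              (Finset.Ioc 0 (2 * m + 1)).filter (fun t => w + 2 ≤ g t) := by
            rw [← Finset.filter_or]
            apply Finset.filter_congr
            intro t _
            constructor
            · intro h; omega
            · intro h; omega
          rw [hpred]
          apply Finset.card_union_of_disjoint
          rw [Finset.disjoint_left]
          intro t ht1 ht2
          rw [Finset.mem_filter] at ht1 ht2
          omega
        have hc1 : ((Finset.Ioc 0 (2 * m + 1)).filter (fun t => w + 1 ≤ g t)).card = c w := by
          rw [hIocv w (by omega), Nat.card_Ioc]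
          omega
        have hc2 : ((Finset.Ioc 0 (2 * m + 1)).filter (fun t => w + 2 ≤ g t)).card
            = c (w + 1) := by
          have := hIocv (w + 1) (by omega)
          simp only [show ∀ x : ℕ, x + 1 + 1 = x + 2 from fun x => rfl] at this
          rw [this, Nat.card_Ioc]
          omega
        have hcount : ((Finset.Ioc 0 (2 * m + 1)).filter (fun t => g t = w + 1)).card
            = Multiset.count (w + 1) P.parts := by
          have := hcsucc w
          omega
        rw [hcount]
        rw [Nat.even_iff]
        have := heven (w + 1) (Nat.even_iff.mpr (by omega))
        rw [Nat.even_iff] at this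
        exact this
      -- now sum over fibers
      have hcardsum : S.card = ∑ v ∈ S.image g, (S.filter (fun t => g t = v)).card :=
        Finset.card_eq_sum_card_image g S
      have hScard_even : Even S.card := by
        rw [hcardsum, even_iff_two_dvd]
        exact Finset.dvd_sum (fun v hv => even_iff_two_dvd.mp (hfib v hv))
      have hScard : S.card = a - b := by rw [hSdef, Nat.card_Ioc]
      have : Even (a - b) := hScard ▸ hScard_even
      rw [Nat.even_iff] at this
      omega
  refine ⟨?_, hpair⟩
  -- parity of mm 0 from the total sum
  have hfil : ∀ (X : Multiset ℕ), (X.filter (fun c => 0 < c)).sum = X.sum := by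
    intro X
    conv_rhs => rw [← Multiset.filter_add_not (fun c => 0 < c) X]
    rw [Multiset.sum_add]
    have h0 : (X.filter (fun c => ¬ 0 < c)).sum = 0 :=
      Multiset.sum_eq_zero (fun x hx => by
        have := (Multiset.mem_filter.mp hx).2
        omega)
    omega
  have hsumcols : cols.sum = 2 * m + 1 := by
    rw [hcols, hfil]
    have h1 : (Multiset.map c (Multiset.range (2 * m + 1))).sum
        = ∑ j ∈ Finset.range (2 * m + 1), c j := by
      rw [Finset.sum_eq_multiset_sum, Finset.range_val]
    rw [h1]
    have hparts_le : ∀ x ∈ P.parts, x ≤ 2 * m + 1 := fun x hx => by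
      have := Multiset.le_sum_of_mem hx
      rw [P.parts_sum] at this
      exact this
    have h2 := aux_sum_count (2 * m + 1) P.parts hparts_le
    rw [P.parts_sum] at h2
    refine Eq.trans ?_ h2
    apply Finset.sum_congr rfl
    intro j _
    rw [hcdef]
    exact (Multiset.countP_eq_card_filter _ _).symm
  have hsummm : (((List.range (2 * p + 1)).map mm : Multiset ℕ).filter
      (fun c => 0 < c)).sum = ∑ j ∈ Finset.range (2 * p + 1), mm j := by
    rw [hfil]
    have hco : ((List.range (2 * p + 1)).map mm : Multiset ℕ) =
        Multiset.map mm (Multiset.range (2 * p + 1)) := rfl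
    rw [hco, Finset.sum_eq_multiset_sum, Finset.range_val]
  have htot : 2 * m + 1 = (∑ j ∈ Finset.range (2 * p + 1), mm j) + Q.sum + Q.sum := by
    rw [← hsumcols, hsplit, Multiset.sum_add, Multiset.sum_add, hsummm]
  have hq2 : ∀ q, q ≤ p → (∑ j ∈ Finset.range (2 * q + 1), mm j) % 2 = mm 0 % 2 := by
    intro q
    induction q with
    | zero => intro _; simp
    | succ q ih =>
      intro hqp
      have h1 : 2 * (q + 1) + 1 = (2 * q + 1) + 1 + 1 := by ring
      rw [h1, Finset.sum_range_succ, Finset.sum_range_succ]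
      have hp := hpair (q + 1) (by omega) hqp
      have hidx1 : 2 * (q + 1) - 1 = 2 * q + 1 := by omega
      have hidx2 : 2 * (q + 1) = 2 * q + 2 := by omega
      rw [hidx1, hidx2] at hp
      rw [show 2 * q + 1 + 1 = 2 * q + 2 from by omega]
      have := ih (by omega)
      omega
  have := hq2 p (le_refl p)
  rw [Nat.odd_iff]
  omega
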